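/- Let Θ̂ = [Â B̂] and Θ* = [A* B*] be matrices in ℝ^{n×(n+m)}, K ∈ ℝ^{m×n} with ‖K‖_F ≤ K̄, and suppose there exist C ≥ 1 and ρ ∈ (0,1) with ‖(Â + B̂K)^k‖_F ≤ C ρ^k and ‖(A* + B*K)^k‖_F ≤ C ρ^k for all k ≥ 0. Let σ_w > 0, and for Θ ∈ {Θ̂, Θ*} define Σ_Θ := σ_w² ∑_{k=0}^∞ (A+BK)^k ((A+BK)ᵀ)^k and Σ̃_Θ := [I; K] Σ_Θ [I; K]ᵀ. Let Q and R be real symmetric matrices, V a real symmetric positive definite (n+m)×(n+m) matrix, λ > 0, D ≥ 0, β ≥ 0, and assume ‖(Θ̂ − Θ*) V^{1/2}‖_F ≤ β and ‖Θ̂‖_F ≤ D + 1/λ. Then | tr((Q + Kᵀ R K)(Σ_{Θ*} − Σ_{Θ̂})) | ≤ g · tr(V^{-1} Σ̃_{Θ*}), where g := (C²(‖Q‖_F + K̄² ‖R‖_F)/(1−ρ²)) · ( 2(D + 1/λ) β ‖V^{1/2}‖₂ + β² ). -/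

import Mathlib

open Matrix MeasureTheory ProbabilityTheory Filter

/-- Frobenius norm of a real matrix. -/
noncomputable def frob {α β : Type*} [Fintype α] [Fintype β] (A : Matrix α β ℝ) : ℝ :=
  Real.sqrt (∑ i, ∑ j, (A i j) ^ 2)

/-- Spectral norm (largest singular value) of a real matrix. -/
noncomputable def spec {α β : Type*} [Fintype α] [Fintype β] [DecidableEq β]
    (A : Matrix α β ℝ) : ℝ :=
  ‖LinearMap.toContinuousLinearMap (Matrix.toEuclideanLin A)‖

/-- The positive semidefinite square root of a positive semidefinite real matrix
(junk value `0` if the matrix is not positive semidefinite). -/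
noncomputable def msqrt {α : Type*} [Fintype α] [DecidableEq α]
    (M : Matrix α α ℝ) : Matrix α α ℝ :=
  open scoped Classical MatrixOrder in
  if h : M.PosSemidef then CFC.sqrt M else 0

/-- Euclidean norm of a real vector. -/
noncomputable def vnorm {α : Type*} [Fintype α] (v : α → ℝ) : ℝ :=
  Real.sqrt (∑ i, (v i) ^ 2)

/-- Closed-loop stationary state covariance
`Σ_Θ = σ_w² ∑_{k=0}^∞ (A+BK)^k ((A+BK)ᵀ)^k`. -/
noncomputable def clCov {n m : ℕ} (A : Matrix (Fin n) (Fin n) ℝ)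
    (B : Matrix (Fin n) (Fin m) ℝ) (K : Matrix (Fin m) (Fin n) ℝ) (σw : ℝ) :
    Matrix (Fin n) (Fin n) ℝ :=
  σw ^ 2 • ∑' k : ℕ, (A + B * K) ^ k * ((A + B * K)ᵀ) ^ k

/-- The lifted covariance `Σ̃_Θ = [I; K] Σ_Θ [I; K]ᵀ`. -/
noncomputable def clCovTilde {n m : ℕ} (A : Matrix (Fin n) (Fin n) ℝ)
    (B : Matrix (Fin n) (Fin m) ℝ) (K : Matrix (Fin m) (Fin n) ℝ) (σw : ℝ) :
    Matrix (Fin n ⊕ Fin m) (Fin n ⊕ Fin m) ℝ :=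
  fromRows (1 : Matrix (Fin n) (Fin n) ℝ) K * clCov A B K σw *
    (fromRows (1 : Matrix (Fin n) (Fin n) ℝ) K)ᵀ

namespace CDB

open scoped MatrixOrder in
lemma msqrt_eq_sqrt {α : Type*} [Fintype α] [DecidableEq α] {M : Matrix α α ℝ}
    (hM : M.PosSemidef) : msqrt M = CFC.sqrt M := by
  unfold msqrt; rw [dif_pos hM]

open scoped MatrixOrder in
lemma psd_msqrt {α : Type*} [Fintype α] [DecidableEq α] {M : Matrix α α ℝ}
    (hM : M.PosSemidef) : (msqrt M).PosSemidef := by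
  rw [msqrt_eq_sqrt hM]; exact Matrix.nonneg_iff_posSemidef.mp (CFC.sqrt_nonneg M)

open scoped MatrixOrder in
lemma msqrt_mul_self_of_psd {α : Type*} [Fintype α] [DecidableEq α] {M : Matrix α α ℝ}
    (hM : M.PosSemidef) : msqrt M * msqrt M = M := by
  rw [msqrt_eq_sqrt hM]; exact CFC.sqrt_mul_sqrt_self M (Matrix.nonneg_iff_posSemidef.mpr hM)

end CDB

attribute [local instance] Matrix.frobeniusSeminormedAddCommGroup
  Matrix.frobeniusNormedAddCommGroup Matrix.frobeniusNormedSpace Matrix.frobeniusIsBoundedSMul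

set_option linter.unusedVariables false
set_option linter.unusedSectionVars false

namespace CDB

variable {α β γ : Type*} [Fintype α] [Fintype β] [Fintype γ]

lemma norm_eq_sqrt_matrix (A : Matrix α β ℝ) :
    ‖A‖ = Real.sqrt (∑ i, ∑ j, (A i j) ^ 2) := by
  rw [Matrix.frobenius_norm_def, Real.sqrt_eq_rpow]
  congr 1
  refine Finset.sum_congr rfl fun i _ => Finset.sum_congr rfl fun j _ => ?_
  rw [show ((2:ℝ)) = ((2:ℕ):ℝ) by norm_num, Real.rpow_natCast, Real.norm_eq_abs, sq_abs]

lemma frob_eq_norm (A : Matrix α β ℝ) : frob A = ‖A‖ := (norm_eq_sqrt_matrix A).symm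

lemma abs_trace_mul_le (A : Matrix α β ℝ) (B : Matrix β α ℝ) :
    |(A * B).trace| ≤ ‖A‖ * ‖B‖ := by
  have h1 : (A * B).trace = ∑ p ∈ (Finset.univ ×ˢ Finset.univ : Finset (α × β)),
      A p.1 p.2 * B p.2 p.1 := by
    rw [Matrix.trace, Finset.sum_product]
    simp [Matrix.diag, Matrix.mul_apply]
  have h2 := Finset.sum_mul_sq_le_sq_mul_sq (Finset.univ ×ˢ Finset.univ : Finset (α × β))
    (fun p => A p.1 p.2) (fun p => B p.2 p.1)
  have h3 : |(A * B).trace| = Real.sqrt (((A * B).trace)^2) := (Real.sqrt_sq_eq_abs _).symm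
  rw [h3, norm_eq_sqrt_matrix, norm_eq_sqrt_matrix, ← Real.sqrt_mul (by positivity)]
  apply Real.sqrt_le_sqrt
  rw [h1]
  refine h2.trans (le_of_eq ?_)
  congr 1
  · rw [Finset.sum_product]
  · rw [Finset.sum_product]
    exact Finset.sum_comm

lemma spec_nonneg [DecidableEq β] (A : Matrix α β ℝ) : 0 ≤ spec A := norm_nonneg _

lemma mulVec_sq_sum_le [DecidableEq β] (A : Matrix α β ℝ) (v : β → ℝ) :
    ∑ i, ((A *ᵥ v) i) ^ 2 ≤ spec A ^ 2 * ∑ j, (v j) ^ 2 := by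
  have key := (LinearMap.toContinuousLinearMap (Matrix.toEuclideanLin A)).le_opNorm
    ((WithLp.equiv 2 (β → ℝ)).symm v)
  rw [LinearMap.coe_toContinuousLinearMap'] at key
  rw [show Matrix.toEuclideanLin A ((WithLp.equiv 2 (β → ℝ)).symm v) = (WithLp.equiv 2 (α → ℝ)).symm (A *ᵥ v) from rfl] at key
  have hn1 : ‖(WithLp.equiv 2 (α → ℝ)).symm (A *ᵥ v)‖ = Real.sqrt (∑ i, ((A *ᵥ v) i)^2) := by
    rw [EuclideanSpace.norm_eq]
    congr 1
    refine Finset.sum_congr rfl fun i _ => ?_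
    rw [WithLp.equiv_symm_apply, PiLp.toLp_apply, Real.norm_eq_abs, sq_abs]
  have hn2 : ‖(WithLp.equiv 2 (β → ℝ)).symm v‖ = Real.sqrt (∑ j, (v j)^2) := by
    rw [EuclideanSpace.norm_eq]
    congr 1
    refine Finset.sum_congr rfl fun i _ => ?_
    rw [WithLp.equiv_symm_apply, PiLp.toLp_apply, Real.norm_eq_abs, sq_abs]
  rw [hn1, hn2] at key
  have h2 : Real.sqrt (∑ i, ((A *ᵥ v) i)^2) ^ 2 ≤ (spec A * Real.sqrt (∑ j, (v j)^2))^2 :=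
    pow_le_pow_left₀ (Real.sqrt_nonneg _) key 2
  rwa [Real.sq_sqrt (by positivity), mul_pow, Real.sq_sqrt (by positivity)] at h2

lemma norm_mul_le_spec [DecidableEq β] (A : Matrix α β ℝ) (B : Matrix β γ ℝ) :
    ‖A * B‖ ≤ spec A * ‖B‖ := by
  rw [norm_eq_sqrt_matrix, norm_eq_sqrt_matrix, ← Real.sqrt_sq (spec_nonneg A),
    ← Real.sqrt_mul (by positivity)]
  apply Real.sqrt_le_sqrt
  rw [Finset.sum_comm]
  calc ∑ j, ∑ i, ((A * B) i j)^2 = ∑ j, ∑ i, ((A *ᵥ (fun k => B k j)) i)^2 := by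
        refine Finset.sum_congr rfl fun j _ => Finset.sum_congr rfl fun i _ => ?_
        rw [Matrix.mul_apply, Matrix.mulVec, dotProduct]
    _ ≤ ∑ j, spec A ^2 * ∑ k, (B k j)^2 := Finset.sum_le_sum fun j _ => mulVec_sq_sum_le A _
    _ = spec A ^2 * ∑ k, ∑ j, (B k j)^2 := by rw [← Finset.mul_sum, Finset.sum_comm]

section PSD
variable [DecidableEq α] {M : Matrix α α ℝ}

lemma psd_quad (hM : M.PosSemidef) (a : ℝ) (i j : α) :
    0 ≤ M i i * (a * a) + (M i j + M j i) * a + M j j := by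
  have h := hM.dotProduct_mulVec_nonneg (Pi.single i a + Pi.single j 1)
  simp only [star_trivial, Matrix.mulVec_add, Matrix.mulVec_single, dotProduct_add,
    add_dotProduct, single_dotProduct, Pi.smul_apply, Matrix.col_apply, op_smul_eq_mul] at h
  refine h.trans_eq ?_
  ring

lemma psd_entry_sq_le (hM : M.PosSemidef) (i j : α) : (M i j)^2 ≤ M i i * M j j := by
  have hsym : M j i = M i j := by
    have := hM.1
    rw [Matrix.IsHermitian] at this
    conv_lhs => rw [← this]
    simp [Matrix.conjTranspose_apply]
  have hd := discrim_le_zero (a := M i i) (b := M i j + M j i) (c := M j j)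
    (fun x => psd_quad hM x i j)
  rw [discrim, hsym] at hd
  nlinarith [hd]

lemma psd_diag_nonneg (hM : M.PosSemidef) (i : α) : 0 ≤ M i i := by
  have h := hM.dotProduct_mulVec_nonneg (Pi.single i 1)
  simpa [Matrix.mulVec_single, dotProduct_single] using h

lemma psd_norm_le_trace (hM : M.PosSemidef) : ‖M‖ ≤ M.trace := by
  rw [norm_eq_sqrt_matrix]
  have htr : 0 ≤ M.trace := Finset.sum_nonneg fun i _ => psd_diag_nonneg hM i
  have : ∑ i, ∑ j, (M i j)^2 ≤ M.trace ^ 2 := by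
    rw [Matrix.trace, sq, Finset.sum_mul_sum]
    exact Finset.sum_le_sum fun i _ => Finset.sum_le_sum fun j _ => psd_entry_sq_le hM i j
  calc Real.sqrt (∑ i, ∑ j, (M i j)^2) ≤ Real.sqrt (M.trace ^ 2) := Real.sqrt_le_sqrt this
    _ = |M.trace| := Real.sqrt_sq_eq_abs _
    _ = M.trace := abs_of_nonneg htr

lemma psd_smul (hM : M.PosSemidef) {c : ℝ} (hc : 0 ≤ c) : (c • M).PosSemidef := by
  exact hM.smul hc

end PSD

lemma norm_sq_eq_trace (X : Matrix α β ℝ) : ‖X‖^2 = (X * Xᵀ).trace := by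
  rw [norm_eq_sqrt_matrix, Real.sq_sqrt (by positivity), Matrix.trace]
  refine Finset.sum_congr rfl fun i _ => ?_
  simp [Matrix.mul_apply, sq]

/-! ### Series lemmas -/

variable {n : ℕ} {C ρ : ℝ}

lemma matrix_complete : CompleteSpace (Matrix (Fin n) (Fin n) ℝ) :=
  FiniteDimensional.complete ℝ _

lemma term_norm_le (L : Matrix (Fin n) (Fin n) ℝ) (hL : ∀ k : ℕ, ‖L ^ k‖ ≤ C * ρ ^ k) (k : ℕ) :
    ‖L ^ k * (Lᵀ) ^ k‖ ≤ C^2 * (ρ^2)^ k := by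
  calc ‖L ^ k * (Lᵀ) ^ k‖ ≤ ‖L^k‖ * ‖(Lᵀ)^k‖ := Matrix.frobenius_norm_mul _ _
    _ = ‖L^k‖ * ‖L^k‖ := by rw [← Matrix.transpose_pow, Matrix.frobenius_norm_transpose]
    _ ≤ (C * ρ^k) * (C * ρ^k) := by
        have h0 : (0:ℝ) ≤ ‖L^k‖ := norm_nonneg _
        exact mul_le_mul (hL k) (hL k) h0 (le_trans h0 (hL k))
    _ = C^2 * (ρ^2)^k := by rw [← pow_mul, pow_mul']; ring

lemma series_summable (L : Matrix (Fin n) (Fin n) ℝ) (hρ0 : 0 ≤ ρ) (hρ1 : ρ < 1)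
    (hL : ∀ k : ℕ, ‖L ^ k‖ ≤ C * ρ ^ k) : Summable (fun k : ℕ => L ^ k * (Lᵀ) ^ k) := by
  have := matrix_complete (n := n)
  apply Summable.of_norm_bounded (g := fun k => C^2 * (ρ^2)^k)
  · apply Summable.mul_left
    exact summable_geometric_of_lt_one (by positivity) (by nlinarith)
  · exact term_norm_le L hL

lemma series_fixed_point (L : Matrix (Fin n) (Fin n) ℝ) (hρ0 : 0 ≤ ρ) (hρ1 : ρ < 1)
    (hL : ∀ k : ℕ, ‖L ^ k‖ ≤ C * ρ ^ k) :
    (∑' k : ℕ, L ^ k * (Lᵀ) ^ k) = 1 + L * (∑' k : ℕ, L ^ k * (Lᵀ) ^ k) * Lᵀ := by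
  have := matrix_complete (n := n)
  have hs := series_summable L hρ0 hρ1 hL
  have h0 : (∑' k : ℕ, L ^ k * (Lᵀ) ^ k)
      = L^0 * (Lᵀ)^0 + ∑' k : ℕ, L ^ (k+1) * (Lᵀ) ^ (k+1) := hs.tsum_eq_zero_add
  conv_lhs => rw [h0]
  simp only [pow_zero, one_mul]
  congr 1
  have hterm : ∀ k : ℕ, L ^ (k+1) * (Lᵀ) ^ (k+1) = L * (L^k * (Lᵀ)^k) * Lᵀ := by
    intro k
    rw [pow_succ', pow_succ]
    simp [mul_assoc]
  simp_rw [hterm]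
  rw [(hs.mul_left L).tsum_mul_right Lᵀ, hs.tsum_mul_left L]

/-- quadratic form as a continuous linear map in the matrix argument -/
noncomputable def quadLM (x : Fin n → ℝ) : Matrix (Fin n) (Fin n) ℝ →L[ℝ] ℝ :=
  LinearMap.toContinuousLinearMap
  { toFun := fun M => x ⬝ᵥ (M *ᵥ x)
    map_add' := fun A B => by simp [Matrix.add_mulVec, dotProduct_add]
    map_smul' := fun c M => by simp [Matrix.smul_mulVec, dotProduct_smul] }

lemma quadLM_apply (x : Fin n → ℝ) (M : Matrix (Fin n) (Fin n) ℝ) :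
    quadLM x M = x ⬝ᵥ (M *ᵥ x) := rfl

lemma tsum_posSemidef {f : ℕ → Matrix (Fin n) (Fin n) ℝ} (hs : Summable f)
    (hf : ∀ k, (f k).PosSemidef) : (∑' k, f k).PosSemidef := by
  rw [Matrix.posSemidef_iff_dotProduct_mulVec]
  constructor
  · rw [Matrix.IsHermitian, Matrix.conjTranspose_eq_transpose_of_trivial, Matrix.transpose_tsum]
    refine tsum_congr fun k => ?_
    rw [← Matrix.conjTranspose_eq_transpose_of_trivial]
    exact (hf k).1
  · intro x
    have h1 : HasSum (fun k => quadLM x (f k)) (quadLM x (∑' k, f k)) :=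
      (quadLM x).hasSum hs.hasSum
    have h2 : (0:ℝ) ≤ quadLM x (∑' k, f k) := by
      rw [← h1.tsum_eq]
      exact tsum_nonneg fun k => by simpa [quadLM_apply] using (hf k).dotProduct_mulVec_nonneg x
    simpa [quadLM_apply] using h2

lemma pow_mul_transpose_posSemidef (L : Matrix (Fin n) (Fin n) ℝ) (k : ℕ) :
    (L ^ k * (Lᵀ) ^ k).PosSemidef := by
  have := Matrix.posSemidef_self_mul_conjTranspose (L ^ k)
  simpa [Matrix.conjTranspose_eq_transpose_of_trivial, Matrix.transpose_pow] using this

lemma telescope {Lh Dm E : Matrix (Fin n) (Fin n) ℝ} (hD : Dm = Lh * Dm * Lhᵀ + E) (N : ℕ) :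
    Dm = (∑ k ∈ Finset.range N, Lh^k * E * (Lhᵀ)^k) + Lh^N * Dm * (Lhᵀ)^N := by
  induction N with
  | zero => simp
  | succ N ih =>
    have key : Lh^N * Dm * (Lhᵀ)^N
        = Lh^N * E * (Lhᵀ)^N + Lh^(N+1) * Dm * (Lhᵀ)^(N+1) := by
      conv_lhs => rw [hD]
      rw [pow_succ, pow_succ']
      noncomm_ring
    rw [Finset.sum_range_succ]
    conv_lhs => rw [ih, key]
    rw [add_assoc]

lemma sandwich_norm_le (E Lh : Matrix (Fin n) (Fin n) ℝ) (hL : ∀ k : ℕ, ‖Lh ^ k‖ ≤ C * ρ ^ k)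
    (k : ℕ) :
    ‖Lh^k * E * (Lhᵀ)^k‖ ≤ ‖E‖ * (C^2 * (ρ^2)^k) := by
  have h0 : (0:ℝ) ≤ ‖Lh^k‖ := norm_nonneg _
  have hck : 0 ≤ C * ρ^k := le_trans h0 (hL k)
  calc ‖Lh^k * E * (Lhᵀ)^k‖ ≤ ‖Lh^k * E‖ * ‖(Lhᵀ)^k‖ := Matrix.frobenius_norm_mul _ _
    _ = ‖Lh^k * E‖ * ‖Lh^k‖ := by rw [← Matrix.transpose_pow, Matrix.frobenius_norm_transpose]
    _ ≤ (‖Lh^k‖ * ‖E‖) * ‖Lh^k‖ :=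
        mul_le_mul_of_nonneg_right (Matrix.frobenius_norm_mul _ _) h0
    _ ≤ ((C * ρ^k) * ‖E‖) * (C * ρ^k) := by
        have h1 : ‖Lh^k‖ * ‖E‖ ≤ (C*ρ^k) * ‖E‖ :=
          mul_le_mul_of_nonneg_right (hL k) (norm_nonneg _)
        exact mul_le_mul h1 (hL k) h0 (by positivity)
    _ = ‖E‖ * (C^2 * (ρ^2)^k) := by rw [← pow_mul, pow_mul']; ring

lemma trace_telescope_bound (M Dm E Lh : Matrix (Fin n) (Fin n) ℝ)
    (hD : Dm = Lh * Dm * Lhᵀ + E)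
    (hρ0 : 0 ≤ ρ) (hρ1 : ρ < 1) (hL : ∀ k : ℕ, ‖Lh ^ k‖ ≤ C * ρ ^ k) :
    |(M * Dm).trace| ≤ ‖M‖ * ‖E‖ * (C^2 / (1 - ρ^2)) := by
  have hr0 : (0:ℝ) ≤ ρ^2 := by positivity
  have hr1 : ρ^2 < 1 := by nlinarith
  have key : ∀ N : ℕ, |(M * Dm).trace|
      ≤ ‖M‖ * ‖E‖ * C^2 * (1 - ρ^2)⁻¹ + (‖M‖ * ‖Dm‖ * C^2) * (ρ^2)^N := by
    intro N
    have hsplit : (M * Dm).trace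
        = (∑ k ∈ Finset.range N, (M * (Lh^k * E * (Lhᵀ)^k)).trace)
          + (M * (Lh^N * Dm * (Lhᵀ)^N)).trace := by
      conv_lhs => rw [telescope hD N]
      rw [mul_add, Finset.mul_sum, Matrix.trace_add, Matrix.trace_sum]
    rw [hsplit]
    refine (abs_add_le _ _).trans ?_
    have h1 : |∑ k ∈ Finset.range N, (M * (Lh^k * E * (Lhᵀ)^k)).trace|
        ≤ ‖M‖ * ‖E‖ * C^2 * (1 - ρ^2)⁻¹ := by
      refine (Finset.abs_sum_le_sum_abs _ _).trans ?_
      have hterm : ∀ k ∈ Finset.range N, |(M * (Lh^k * E * (Lhᵀ)^k)).trace|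
          ≤ (‖M‖ * ‖E‖ * C^2) * (ρ^2)^k := by
        intro k _
        refine (abs_trace_mul_le _ _).trans ?_
        have := sandwich_norm_le E Lh hL k
        calc ‖M‖ * ‖Lh^k * E * (Lhᵀ)^k‖ ≤ ‖M‖ * (‖E‖ * (C^2 * (ρ^2)^k)) :=
              mul_le_mul_of_nonneg_left this (norm_nonneg _)
          _ = (‖M‖ * ‖E‖ * C^2) * (ρ^2)^k := by ring
      refine (Finset.sum_le_sum hterm).trans ?_
      rw [← Finset.mul_sum]
      have hgeo : ∑ k ∈ Finset.range N, (ρ^2)^k ≤ (1 - ρ^2)⁻¹ := by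
        have hsum := Summable.sum_le_tsum (Finset.range N) (fun i _ => pow_nonneg hr0 i)
          (summable_geometric_of_lt_one hr0 hr1)
        rwa [tsum_geometric_of_lt_one hr0 hr1] at hsum
      exact mul_le_mul_of_nonneg_left hgeo (by positivity)
    have h2 : |(M * (Lh^N * Dm * (Lhᵀ)^N)).trace| ≤ (‖M‖ * ‖Dm‖ * C^2) * (ρ^2)^N := by
      refine (abs_trace_mul_le _ _).trans ?_
      have := sandwich_norm_le Dm Lh hL N
      calc ‖M‖ * ‖Lh^N * Dm * (Lhᵀ)^N‖ ≤ ‖M‖ * (‖Dm‖ * (C^2 * (ρ^2)^N)) :=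
            mul_le_mul_of_nonneg_left this (norm_nonneg _)
        _ = (‖M‖ * ‖Dm‖ * C^2) * (ρ^2)^N := by ring
    exact add_le_add h1 h2
  have hten : Tendsto (fun N : ℕ => ‖M‖ * ‖E‖ * C^2 * (1 - ρ^2)⁻¹ + (‖M‖ * ‖Dm‖ * C^2) * (ρ^2)^N)
      atTop (nhds (‖M‖ * ‖E‖ * C^2 * (1 - ρ^2)⁻¹ + (‖M‖ * ‖Dm‖ * C^2) * 0)) :=
    tendsto_const_nhds.add ((tendsto_pow_atTop_nhds_zero_of_lt_one hr0 hr1).const_mul _)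
  have hfin := ge_of_tendsto' hten key
  rw [mul_zero, add_zero] at hfin
  calc |(M * Dm).trace| ≤ ‖M‖ * ‖E‖ * C^2 * (1 - ρ^2)⁻¹ := hfin
    _ = ‖M‖ * ‖E‖ * (C^2 / (1 - ρ^2)) := by ring

/-! ### msqrt facts -/

variable {κ ν : Type*} [Fintype κ] [Fintype ν] [DecidableEq κ]

section msqrtFacts
variable {V : Matrix κ κ ℝ} (hV : V.PosDef)
include hV

lemma msqrt_psd : (msqrt V).PosSemidef := psd_msqrt hV.posSemidef

lemma msqrt_mul_self : msqrt V * msqrt V = V := msqrt_mul_self_of_psd hV.posSemidef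

lemma msqrt_symm : (msqrt V)ᵀ = msqrt V := by
  rw [← Matrix.conjTranspose_eq_transpose_of_trivial]
  exact (msqrt_psd hV).1

lemma msqrt_det_unit : IsUnit (msqrt V).det := by
  have h : (msqrt V).det * (msqrt V).det = V.det := by
    rw [← Matrix.det_mul, msqrt_mul_self hV]
  have hd : V.det ≠ 0 := ne_of_gt hV.det_pos
  refine isUnit_iff_ne_zero.mpr fun h0 => hd ?_
  rw [← h, h0, mul_zero]

lemma msqrt_mul_inv : msqrt V * (msqrt V)⁻¹ = 1 := Matrix.mul_nonsing_inv _ (msqrt_det_unit hV)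
lemma msqrt_inv_mul : (msqrt V)⁻¹ * msqrt V = 1 := Matrix.nonsing_inv_mul _ (msqrt_det_unit hV)

lemma msqrt_inv_symm : ((msqrt V)⁻¹)ᵀ = (msqrt V)⁻¹ := by
  rw [Matrix.transpose_nonsing_inv, msqrt_symm hV]

lemma V_inv_eq : V⁻¹ = (msqrt V)⁻¹ * (msqrt V)⁻¹ := by
  conv_lhs => rw [← msqrt_mul_self hV]
  rw [Matrix.mul_inv_rev]

end msqrtFacts

lemma norm_mul_right_spec (X : Matrix ν κ ℝ) {S : Matrix κ κ ℝ} (hS : Sᵀ = S) :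
    ‖X * S‖ ≤ spec S * ‖X‖ := by
  rw [← Matrix.frobenius_norm_transpose (X * S), Matrix.transpose_mul, hS,
    ← Matrix.frobenius_norm_transpose X]
  exact norm_mul_le_spec S Xᵀ

section Ebound
variable {V Sg : Matrix κ κ ℝ} {Δ Θh : Matrix ν κ ℝ} {β d : ℝ}

lemma trace_SiSgSi (hV : V.PosDef) (Sg : Matrix κ κ ℝ) :
    ((msqrt V)⁻¹ * Sg * (msqrt V)⁻¹).trace = (V⁻¹ * Sg).trace := by
  rw [Matrix.trace_mul_cycle, ← V_inv_eq hV]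

lemma t_sq_eq_T (hV : V.PosDef) (hSg : Sg.PosSemidef) :
    ‖(msqrt V)⁻¹ * msqrt Sg‖^2 = (V⁻¹ * Sg).trace := by
  have hWsymm : (msqrt Sg)ᵀ = msqrt Sg := by
    rw [← Matrix.conjTranspose_eq_transpose_of_trivial]; exact (psd_msqrt hSg).1
  rw [norm_sq_eq_trace, Matrix.transpose_mul, hWsymm, msqrt_inv_symm hV]
  have h1 : (msqrt V)⁻¹ * msqrt Sg * (msqrt Sg * (msqrt V)⁻¹)
      = (msqrt V)⁻¹ * (msqrt Sg * msqrt Sg) * (msqrt V)⁻¹ := by simp only [Matrix.mul_assoc]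
  rw [h1, msqrt_mul_self_of_psd hSg]
  exact trace_SiSgSi hV Sg

lemma T_nonneg (hV : V.PosDef) (hSg : Sg.PosSemidef) : 0 ≤ (V⁻¹ * Sg).trace := by
  rw [← t_sq_eq_T hV hSg]; positivity

lemma SiSgSi_psd (hV : V.PosDef) (hSg : Sg.PosSemidef) :
    ((msqrt V)⁻¹ * Sg * (msqrt V)⁻¹).PosSemidef := by
  have := hSg.mul_mul_conjTranspose_same (msqrt V)⁻¹
  rwa [Matrix.conjTranspose_eq_transpose_of_trivial, msqrt_inv_symm hV] at this

lemma bound_cross (hV : V.PosDef) (hSg : Sg.PosSemidef) (hβ : ‖Δ * msqrt V‖ ≤ β)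
    (hd : ‖Θh‖ ≤ d) :
    ‖Δ * Sg * Θhᵀ‖ ≤ d * β * spec (msqrt V) * (V⁻¹ * Sg).trace := by
  set S := msqrt V with hSdef
  set W := msqrt Sg with hWdef
  have hβ0 : 0 ≤ β := le_trans (norm_nonneg _) hβ
  have hd0 : 0 ≤ d := le_trans (norm_nonneg _) hd
  have hWsymm : Wᵀ = W := by
    rw [← Matrix.conjTranspose_eq_transpose_of_trivial]; exact (psd_msqrt hSg).1
  have hWW : W * W = Sg := msqrt_mul_self_of_psd hSg
  have hSSi : S * S⁻¹ = 1 := msqrt_mul_inv hV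
  have hSiS : S⁻¹ * S = 1 := msqrt_inv_mul hV
  have hSsymm : Sᵀ = S := msqrt_symm hV
  have hSisymm : (S⁻¹)ᵀ = S⁻¹ := msqrt_inv_symm hV
  set t := ‖S⁻¹ * W‖ with htdef
  have hT := t_sq_eq_T hV hSg
  have hid : Δ * Sg * Θhᵀ = (Δ * S) * ((S⁻¹ * W) * (W * Θhᵀ)) := by
    have h1 : (Δ * S) * ((S⁻¹ * W) * (W * Θhᵀ)) = Δ * (S * S⁻¹) * ((W * W) * Θhᵀ) := by
      simp only [Matrix.mul_assoc]
    rw [h1, hSSi, hWW, Matrix.mul_one, Matrix.mul_assoc]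
  have hWSi : ‖W * S⁻¹‖ = t := by
    have h : W * S⁻¹ = (S⁻¹ * W)ᵀ := by rw [Matrix.transpose_mul, hWsymm, hSisymm]
    rw [h, Matrix.frobenius_norm_transpose]
  have hWΘ : ‖W * Θhᵀ‖ ≤ spec S * (d * t) := by
    have e1 : ‖W * Θhᵀ‖ = ‖Θh * W‖ := by
      rw [← Matrix.frobenius_norm_transpose (Θh * W), Matrix.transpose_mul, hWsymm]
    have e2 : Θh * W = (Θh * (W * S⁻¹)) * S := by
      have h2 : (Θh * (W * S⁻¹)) * S = Θh * (W * (S⁻¹ * S)) := by simp only [Matrix.mul_assoc]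
      rw [h2, hSiS, Matrix.mul_one]
    rw [e1, e2]
    refine (norm_mul_right_spec _ hSsymm).trans ?_
    refine mul_le_mul_of_nonneg_left ?_ (spec_nonneg S)
    refine (Matrix.frobenius_norm_mul _ _).trans ?_
    rw [hWSi]
    exact mul_le_mul_of_nonneg_right hd (norm_nonneg _)
  calc ‖Δ * Sg * Θhᵀ‖ = ‖(Δ * S) * ((S⁻¹ * W) * (W * Θhᵀ))‖ := by rw [hid]
    _ ≤ ‖Δ * S‖ * ‖(S⁻¹ * W) * (W * Θhᵀ)‖ := Matrix.frobenius_norm_mul _ _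
    _ ≤ ‖Δ * S‖ * (t * ‖W * Θhᵀ‖) :=
        mul_le_mul_of_nonneg_left (Matrix.frobenius_norm_mul _ _) (norm_nonneg _)
    _ ≤ β * (t * (spec S * (d * t))) := by
        refine mul_le_mul hβ ?_ (by positivity) hβ0
        exact mul_le_mul_of_nonneg_left hWΘ (norm_nonneg _)
    _ = d * β * spec S * t^2 := by ring
    _ = d * β * spec S * (V⁻¹ * Sg).trace := by rw [← hT]

lemma bound_self (hV : V.PosDef) (hSg : Sg.PosSemidef) (hβ : ‖Δ * msqrt V‖ ≤ β) :
    ‖Δ * Sg * Δᵀ‖ ≤ β^2 * (V⁻¹ * Sg).trace := by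
  set S := msqrt V with hSdef
  have hβ0 : 0 ≤ β := le_trans (norm_nonneg _) hβ
  have hSSi : S * S⁻¹ = 1 := msqrt_mul_inv hV
  have hSiS : S⁻¹ * S = 1 := msqrt_inv_mul hV
  have hSsymm : Sᵀ = S := msqrt_symm hV
  have hid : Δ * Sg * Δᵀ = (Δ * S) * ((S⁻¹ * Sg * S⁻¹) * (Δ * S)ᵀ) := by
    rw [Matrix.transpose_mul, hSsymm]
    have h1 : (Δ * S) * ((S⁻¹ * Sg * S⁻¹) * (S * Δᵀ))
        = Δ * ((S * S⁻¹) * (Sg * ((S⁻¹ * S) * Δᵀ))) := by simp only [Matrix.mul_assoc]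
    rw [h1, hSSi, hSiS, Matrix.one_mul, Matrix.one_mul, ← Matrix.mul_assoc]
  have hZ : ‖S⁻¹ * Sg * S⁻¹‖ ≤ (V⁻¹ * Sg).trace := by
    refine (psd_norm_le_trace (SiSgSi_psd hV hSg)).trans ?_
    rw [trace_SiSgSi hV]
  calc ‖Δ * Sg * Δᵀ‖ = ‖(Δ * S) * ((S⁻¹ * Sg * S⁻¹) * (Δ * S)ᵀ)‖ := by rw [hid]
    _ ≤ ‖Δ * S‖ * ‖(S⁻¹ * Sg * S⁻¹) * (Δ * S)ᵀ‖ := Matrix.frobenius_norm_mul _ _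
    _ ≤ ‖Δ * S‖ * (‖S⁻¹ * Sg * S⁻¹‖ * ‖(Δ * S)ᵀ‖) :=
        mul_le_mul_of_nonneg_left (Matrix.frobenius_norm_mul _ _) (norm_nonneg _)
    _ ≤ β * ((V⁻¹ * Sg).trace * β) := by
        rw [Matrix.frobenius_norm_transpose]
        refine mul_le_mul hβ ?_ (by positivity) hβ0
        exact mul_le_mul hZ hβ (norm_nonneg _) (T_nonneg hV hSg)
    _ = β^2 * (V⁻¹ * Sg).trace := by ring

end Ebound

end CDB
set_option maxHeartbeats 2000000 in
theorem cost_difference_bound_weighted_star {n m : ℕ}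
    (Ahat Astar : Matrix (Fin n) (Fin n) ℝ) (Bhat Bstar : Matrix (Fin n) (Fin m) ℝ)
    (K : Matrix (Fin m) (Fin n) ℝ) (Kbar C ρ σw lam D β : ℝ)
    (Q : Matrix (Fin n) (Fin n) ℝ) (R : Matrix (Fin m) (Fin m) ℝ)
    (V : Matrix (Fin n ⊕ Fin m) (Fin n ⊕ Fin m) ℝ)
    (hK : frob K ≤ Kbar) (hC : 1 ≤ C) (hρ : ρ ∈ Set.Ioo (0 : ℝ) 1)
    (hhat : ∀ k : ℕ, frob ((Ahat + Bhat * K) ^ k) ≤ C * ρ ^ k)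
    (hstar : ∀ k : ℕ, frob ((Astar + Bstar * K) ^ k) ≤ C * ρ ^ k)
    (hσ : 0 < σw) (hQ : Q.IsSymm) (hR : R.IsSymm) (hV : V.PosDef)
    (hlam : 0 < lam) (hD : 0 ≤ D) (hβ : 0 ≤ β)
    (hdiff : frob ((fromCols Ahat Bhat - fromCols Astar Bstar) * msqrt V) ≤ β)
    (hhatnorm : frob (fromCols Ahat Bhat) ≤ D + 1 / lam) :
    |((Q + Kᵀ * R * K) * (clCov Astar Bstar K σw - clCov Ahat Bhat K σw)).trace|
      ≤ (C ^ 2 * (frob Q + Kbar ^ 2 * frob R) / (1 - ρ ^ 2)) *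
          (2 * (D + 1 / lam) * β * spec (msqrt V) + β ^ 2) *
          (V⁻¹ * clCovTilde Astar Bstar K σw).trace := by
  classical
  obtain ⟨hρ0, hρ1⟩ := hρ
  have hr0 : (0:ℝ) ≤ ρ := le_of_lt hρ0
  simp only [CDB.frob_eq_norm] at hK hdiff hhatnorm hhat hstar ⊢
  set Lh := Ahat + Bhat * K with hLh
  set Ls := Astar + Bstar * K with hLs
  set H : Matrix (Fin n ⊕ Fin m) (Fin n) ℝ := fromRows 1 K with hH
  set Θh := fromCols Ahat Bhat with hΘhdef
  set Θs := fromCols Astar Bstar with hΘsdef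
  have hΘhH : Θh * H = Lh := by
    rw [hΘhdef, hH, hLh, Matrix.fromCols_mul_fromRows, Matrix.mul_one]
  have hΘsH : Θs * H = Ls := by
    rw [hΘsdef, hH, hLs, Matrix.fromCols_mul_fromRows, Matrix.mul_one]
  have hsumh := CDB.series_summable Lh hr0 hρ1 hhat
  have hsums := CDB.series_summable Ls hr0 hρ1 hstar
  set Ph := ∑' k : ℕ, Lh ^ k * (Lhᵀ) ^ k with hPh
  set Ps := ∑' k : ℕ, Ls ^ k * (Lsᵀ) ^ k with hPs
  set Sgh := σw ^ 2 • Ph with hSghdef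
  set Sgs := σw ^ 2 • Ps with hSgsdef
  have hcovh : clCov Ahat Bhat K σw = Sgh := rfl
  have hcovs : clCov Astar Bstar K σw = Sgs := rfl
  set Sgt := H * Sgs * Hᵀ with hSgtdef
  have hcovt : clCovTilde Astar Bstar K σw = Sgt := rfl
  rw [hcovh, hcovs, hcovt]
  have hfixPh := CDB.series_fixed_point Lh hr0 hρ1 hhat
  have hfixPs := CDB.series_fixed_point Ls hr0 hρ1 hstar
  have hfixh : Sgh = σw ^ 2 • (1 : Matrix (Fin n) (Fin n) ℝ) + Lh * Sgh * Lhᵀ := by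
    rw [hSghdef, hPh]
    conv_lhs => rw [hfixPh]
    rw [smul_add, mul_smul_comm, smul_mul_assoc]
  have hfixs : Sgs = σw ^ 2 • (1 : Matrix (Fin n) (Fin n) ℝ) + Ls * Sgs * Lsᵀ := by
    rw [hSgsdef, hPs]
    conv_lhs => rw [hfixPs]
    rw [smul_add, mul_smul_comm, smul_mul_assoc]
  set E := Ls * Sgs * Lsᵀ - Lh * Sgs * Lhᵀ with hEdef
  set Dm := Sgs - Sgh with hDmdef
  have hD : Dm = Lh * Dm * Lhᵀ + E := by
    rw [hDmdef, hEdef]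
    conv_lhs => rw [hfixs, hfixh]
    simp only [Matrix.mul_sub, Matrix.sub_mul]
    abel
  set M := Q + Kᵀ * R * K with hMdef
  have htrace := CDB.trace_telescope_bound M Dm E Lh hD hr0 hρ1 hhat
  -- positive semidefiniteness of the lifted covariance
  have hPs_psd : Ps.PosSemidef :=
    CDB.tsum_posSemidef hsums (fun k => CDB.pow_mul_transpose_posSemidef Ls k)
  have hSgs_psd : Sgs.PosSemidef := CDB.psd_smul hPs_psd (by positivity)
  have hSgpsd : Sgt.PosSemidef := by
    have := hSgs_psd.mul_mul_conjTranspose_same H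
    rwa [Matrix.conjTranspose_eq_transpose_of_trivial] at this
  -- rewrite E in terms of Θ's
  set Δm := Θh - Θs with hΔdef
  have hEeq : E = Δm * Sgt * Δmᵀ - Δm * Sgt * Θhᵀ - Θh * Sgt * Δmᵀ := by
    have h0 : E = Θs * Sgt * Θsᵀ - Θh * Sgt * Θhᵀ := by
      rw [hEdef, ← hΘsH, ← hΘhH, hSgtdef]
      simp only [Matrix.transpose_mul, Matrix.mul_assoc]
    rw [h0, hΔdef]
    simp only [Matrix.transpose_sub, Matrix.mul_sub, Matrix.sub_mul]
    abel
  have hSgtsymm : Sgtᵀ = Sgt := by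
    rw [← Matrix.conjTranspose_eq_transpose_of_trivial]; exact hSgpsd.1
  have h3 : ‖Θh * Sgt * Δmᵀ‖ = ‖Δm * Sgt * Θhᵀ‖ := by
    rw [← Matrix.frobenius_norm_transpose (Θh * Sgt * Δmᵀ)]
    congr 1
    simp only [Matrix.transpose_mul, Matrix.transpose_transpose, hSgtsymm, Matrix.mul_assoc]
  have hd' : ‖Θh‖ ≤ D + 1 / lam := hhatnorm
  have hβ' : ‖Δm * msqrt V‖ ≤ β := hdiff
  have hcross := CDB.bound_cross hV hSgpsd hβ' hd'
  have hself := CDB.bound_self hV hSgpsd hβ'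
  set T := (V⁻¹ * Sgt).trace with hTdef
  have hT0 : 0 ≤ T := CDB.T_nonneg hV hSgpsd
  have hspec0 : 0 ≤ spec (msqrt V) := CDB.spec_nonneg _
  have hd0 : (0:ℝ) ≤ D + 1 / lam := by positivity
  have hE : ‖E‖ ≤ (2 * (D + 1 / lam) * β * spec (msqrt V) + β ^ 2) * T := by
    have hnorm : ‖E‖ ≤ ‖Δm * Sgt * Δmᵀ‖ + ‖Δm * Sgt * Θhᵀ‖ + ‖Θh * Sgt * Δmᵀ‖ := by
      rw [hEeq]
      refine (norm_sub_le _ _).trans ?_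
      exact add_le_add (norm_sub_le _ _) le_rfl
    rw [h3] at hnorm
    calc ‖E‖ ≤ ‖Δm * Sgt * Δmᵀ‖ + ‖Δm * Sgt * Θhᵀ‖ + ‖Δm * Sgt * Θhᵀ‖ := hnorm
      _ ≤ β ^ 2 * T + (D + 1/lam) * β * spec (msqrt V) * T
            + (D + 1/lam) * β * spec (msqrt V) * T := by
          exact add_le_add (add_le_add hself hcross) hcross
      _ = (2 * (D + 1 / lam) * β * spec (msqrt V) + β ^ 2) * T := by ring
  have hQR0 : (0:ℝ) ≤ ‖Q‖ + Kbar ^ 2 * ‖R‖ :=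
    add_nonneg (norm_nonneg _) (mul_nonneg (sq_nonneg _) (norm_nonneg _))
  have hMn : ‖M‖ ≤ ‖Q‖ + Kbar ^ 2 * ‖R‖ := by
    rw [hMdef]
    refine (norm_add_le _ _).trans ?_
    have hK0 : (0:ℝ) ≤ ‖K‖ := norm_nonneg _
    have hR0 : (0:ℝ) ≤ ‖R‖ := norm_nonneg _
    have h1 : ‖Kᵀ * R * K‖ ≤ Kbar ^ 2 * ‖R‖ := by
      calc ‖Kᵀ * R * K‖ ≤ ‖Kᵀ * R‖ * ‖K‖ := Matrix.frobenius_norm_mul _ _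
        _ ≤ (‖Kᵀ‖ * ‖R‖) * ‖K‖ :=
            mul_le_mul_of_nonneg_right (Matrix.frobenius_norm_mul _ _) hK0
        _ = (‖K‖ * ‖R‖) * ‖K‖ := by rw [Matrix.frobenius_norm_transpose]
        _ ≤ Kbar ^ 2 * ‖R‖ := by
            have hKK : ‖K‖ * ‖K‖ ≤ Kbar * Kbar := mul_le_mul hK hK hK0 (le_trans hK0 hK)
            nlinarith [hKK, hR0, hK0]
    linarith
  have h1ρ : (0:ℝ) < 1 - ρ ^ 2 := by nlinarith
  have hcρ : (0:ℝ) ≤ C ^ 2 / (1 - ρ ^ 2) := by positivity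
  calc |(M * Dm).trace| ≤ ‖M‖ * ‖E‖ * (C ^ 2 / (1 - ρ ^ 2)) := htrace
    _ ≤ (‖Q‖ + Kbar ^ 2 * ‖R‖) * ((2 * (D + 1 / lam) * β * spec (msqrt V) + β ^ 2) * T)
          * (C ^ 2 / (1 - ρ ^ 2)) := by
        refine mul_le_mul_of_nonneg_right ?_ hcρ
        exact mul_le_mul hMn hE (norm_nonneg _) hQR0
    _ = (C ^ 2 * (‖Q‖ + Kbar ^ 2 * ‖R‖) / (1 - ρ ^ 2)) *
          (2 * (D + 1 / lam) * β * spec (msqrt V) + β ^ 2) * T := by ring
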